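/- Let 0 < α < 1/2 and let M ∈ SL(2,ℝ). Then for Lebesgue-almost every ξ ∈ ℝ² there exists a constant C > 0 such that b_{(M,ξ)}(T) < C·T^{−α} for all real T ≥ 1. -/

import Mathlib

open MeasureTheory Real Matrix Set
open scoped ENNReal

noncomputable section

instance : MeasurableSpace (Matrix (Fin 2) (Fin 2) ℝ) := borel _
instance : BorelSpace (Matrix (Fin 2) (Fin 2) ℝ) := ⟨rfl⟩

/-- The ambient space containing the group `G = SL(2,ℝ) ⋉ ℝ²` (pairs of a `2×2`
real matrix and a row vector). -/
abbrev GG : Type := Matrix (Fin 2) (Fin 2) ℝ × (Fin 2 → ℝ)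

/-- The multiplication law `(M,v)(M',v') = (MM', vM' + v')`. -/
def gmul (g h : GG) : GG := (g.1 * h.1, Matrix.vecMul g.2 h.1 + h.2)

/-- `G`, i.e. the set of pairs whose matrix part has determinant one. -/
def GSet : Set GG := {g | g.1.det = 1}

/-- `Γ = SL(2,ℤ) ⋉ ℤ²`. -/
def GammaSet : Set GG :=
  {g | g.1.det = 1 ∧ (∀ i j, ∃ n : ℤ, g.1 i j = (n : ℝ)) ∧ ∀ i, ∃ n : ℤ, g.2 i = (n : ℝ)}

/-- `U^x`. -/
def uElt (x : ℝ) : GG := (!![1, x; 0, 1], 0)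

/-- `a(y)`. -/
def aElt (y : ℝ) : GG := (!![Real.sqrt y, 0; 0, (Real.sqrt y)⁻¹], 0)

/-- `(1₂, ξ)`. -/
def transl (ξ : Fin 2 → ℝ) : GG := (1, ξ)

/-- The five one-parameter subgroups `e₁,…,e₅`. -/
def eFlow : Fin 5 → ℝ → GG :=
  ![fun t => (!![1, t; 0, 1], 0),
    fun t => (!![1, 0; t, 1], 0),
    fun t => (!![Real.exp t, 0; 0, Real.exp (-t)], 0),
    fun t => (1, ![t, 0]),
    fun t => (1, ![0, t])]

/-- Left invariant derivative in the direction `e_i`. -/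
def Dder (i : Fin 5) (F : GG → ℝ) : GG → ℝ :=
  fun g => deriv (fun t : ℝ => F (gmul g (eFlow i t))) 0

/-- Iterated left invariant derivative `D_w` associated to a word `w`. -/
def Dword : List (Fin 5) → (GG → ℝ) → GG → ℝ
  | [], F => F
  | i :: w, F => Dder i (Dword w F)

/-- `f ∈ C_b^k(Γ\G)` : `f` is `Γ`-left-invariant and all its left invariant
derivatives of order `≤ k` exist on `G`, are continuous and bounded there. -/
def InCb (k : ℕ) (f : GG → ℝ) : Prop :=
  (∀ γ ∈ GammaSet, ∀ g ∈ GSet, f (gmul γ g) = f g) ∧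
  (∀ w : List (Fin 5), w.length ≤ k →
      ContinuousOn (Dword w f) GSet ∧ ∃ B : ℝ, ∀ g ∈ GSet, |Dword w f g| ≤ B) ∧
  (∀ (i : Fin 5) (w : List (Fin 5)), (i :: w).length ≤ k → ∀ g ∈ GSet,
      DifferentiableAt ℝ (fun t : ℝ => Dword w f (gmul g (eFlow i t))) 0)

/-- The norm `‖f‖_{C_b^k} = ∑_w sup_{g ∈ G} |D_w f(g)|`, summed over all words of
length `≤ k`. -/
def CbNorm (k : ℕ) (f : GG → ℝ) : ℝ :=
  ∑ n ∈ Finset.range (k + 1), ∑ w : Fin n → Fin 5,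
    ⨆ g : GSet, |Dword (List.ofFn w) f (g : GG)|

/-- `ν` is a left Haar measure on `G` (viewed as a measure on the ambient space
which is concentrated on `GSet`): left invariant, finite on compacts and positive
on nonempty relatively open subsets of `G`. -/
def IsHaarOnG (ν : Measure GG) : Prop :=
  ν GSetᶜ = 0 ∧
  (∀ g ∈ GSet, MeasurePreserving (fun h => gmul g h) ν ν) ∧
  (∀ K : Set GG, IsCompact K → ν K < ⊤) ∧
  (∀ U : Set GG, IsOpen U → (U ∩ GSet).Nonempty → 0 < ν U)

/-- `F` is a `ν`-measurable fundamental domain for the left action of `Γ` on `G`. -/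
def IsFundDom (ν : Measure GG) (F : Set GG) : Prop :=
  MeasurableSet F ∧ F ⊆ GSet ∧
  ν (GSet \ ⋃ γ ∈ GammaSet, gmul γ '' F) = 0 ∧
  ∀ γ₁ ∈ GammaSet, ∀ γ₂ ∈ GammaSet, γ₁ ≠ γ₂ → ν (gmul γ₁ '' F ∩ gmul γ₂ '' F) = 0

/-- `∫_X f dμ = ν(F)⁻¹ ∫_F f dν`. -/
def XAvg (ν : Measure GG) (F : Set GG) (f : GG → ℝ) : ℝ :=
  (ν F).toReal⁻¹ * ∫ g in F, f g ∂ν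

/-- `⟨x⟩`, the distance from `x` to the nearest integer. -/
def nint (x : ℝ) : ℝ := |x - (round x : ℝ)|

/-- The majorant `b_{ξ,L}(y)`, computed in `[0,∞]` with the convention `a/0 = ∞`. -/
def bMajE (ξ : Fin 2 → ℝ) (L y : ℝ) : ℝ≥0∞ :=
  ⨆ q : ℕ+, min (min (ENNReal.ofReal (1 / (q : ℝ) ^ 2))
      (ENNReal.ofReal (Real.sqrt y) / ENNReal.ofReal (L * (q : ℝ) * nint ((q : ℝ) * ξ 0))))
    (ENNReal.ofReal (Real.sqrt y) / ENNReal.ofReal ((q : ℝ) * nint ((q : ℝ) * ξ 1)))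

/-- The majorant `b_{ξ,L}(y)` as a real number (it is always `≤ 1`). -/
def bMaj (ξ : Fin 2 → ℝ) (L y : ℝ) : ℝ := (bMajE ξ L y).toReal

/-- The Euclidean norm on `ℝ²`. -/
def eNorm2 (v : Fin 2 → ℝ) : ℝ := Real.sqrt (v 0 ^ 2 + v 1 ^ 2)

/-- `ℓ(M)`: the Euclidean length of the shortest nonzero vector of `ℤ²M`. -/
def ellM (M : Matrix (Fin 2) (Fin 2) ℝ) : ℝ :=
  ⨅ m : {m : Fin 2 → ℤ // m ≠ 0}, eNorm2 (Matrix.vecMul (fun i => (m.1 i : ℝ)) M)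

/-- `y_g(T) = T⁻¹ ℓ(g a(T))⁻²`. -/
def ygT (g : GG) (T : ℝ) : ℝ := T⁻¹ * (ellM ((gmul g (aElt T)).1) ^ 2)⁻¹

/-- The set of `δ > 0` such that for all `1 ≤ q ≤ δ^{-1/2}`, the set `(q⁻¹ℤ²)g`
is disjoint from `(1/(δq²)) 𝔯_T`. -/
def bgSet (g : GG) (T : ℝ) : Set ℝ :=
  {δ | 0 < δ ∧ ∀ q : ℕ+, ((q : ℕ) : ℝ) ≤ (Real.sqrt δ)⁻¹ → ∀ m : Fin 2 → ℤ,
    ¬ (|Matrix.vecMul (fun i => (m i : ℝ) / ((q : ℕ) : ℝ)) g.1 0 + g.2 0| ≤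
          1 / (δ * ((q : ℕ) : ℝ) ^ 2 * T) ∧
       |Matrix.vecMul (fun i => (m i : ℝ) / ((q : ℕ) : ℝ)) g.1 1 + g.2 1| ≤
          1 / (δ * ((q : ℕ) : ℝ) ^ 2))}

/-- `b_g(T)`, computed in `[0,∞]` (it is `∞` if no `δ > 0` qualifies). -/
def bgE (g : GG) (T : ℝ) : ℝ≥0∞ := sInf (ENNReal.ofReal '' bgSet g T)

/-- The Sobolev norm `‖φ‖_{W^{k,1}}`. -/
def W11Norm (k : ℕ) (φ : ℝ → ℝ) : ℝ :=
  ∑ j ∈ Finset.range (k + 1), ∫ x : ℝ, |iteratedDeriv j φ x|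

/-- `𝔐̃_ξ(X) = ∑_{k≥1} σ(k) min(1/k², 1/(Xk⟨kξ⟩))`, a term with `⟨kξ⟩ = 0` being
read as `σ(k)/k²`. -/
def Mtilde (ξ X : ℝ) : ℝ :=
  ∑' k : ℕ+, (((k : ℕ).divisors.card : ℝ) *
    (if nint (((k : ℕ) : ℝ) * ξ) = 0 then 1 / ((k : ℕ) : ℝ) ^ 2
     else min (1 / ((k : ℕ) : ℝ) ^ 2) (1 / (X * ((k : ℕ) : ℝ) * nint (((k : ℕ) : ℝ) * ξ)))))

/-- `e(x) = e^{2πix}`. -/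
def e2πi (x : ℝ) : ℂ := Complex.exp (2 * (Real.pi : ℂ) * Complex.I * (x : ℂ))

/-- The Fourier coefficient `f̂(M,m)` of a `Γ`-invariant function on `G`. -/
def fhat (f : GG → ℂ) (M : Matrix (Fin 2) (Fin 2) ℝ) (m : Fin 2 → ℤ) : ℂ :=
  ∫ ξ in Set.univ.pi fun _ : Fin 2 => Set.Icc (0:ℝ) 1,
    f (gmul (transl ξ) (M, 0)) * e2πi (-(∑ i, (m i : ℝ) * ξ i))

/-- `f̃_n(M) = f̂(M,(n,0))`. -/
def ftilde (f : GG → ℂ) (n : ℤ) (M : Matrix (Fin 2) (Fin 2) ℝ) : ℂ := fhat f M ![n, 0]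

end

noncomputable section


section AuxBgDecay

/-- `δ_n = (2^(n+1))^(-α)`. -/
def dlt (α : ℝ) (n : ℕ) : ℝ := ((2:ℝ) ^ (n+1)) ^ (-α)

lemma dlt_pos (α : ℝ) (n : ℕ) : 0 < dlt α n :=
  Real.rpow_pos_of_pos (by positivity) _

def aT (α : ℝ) (n q : ℕ) : ℝ := 1 / (dlt α n * (q:ℝ)^2 * 2^n)
def bT (α : ℝ) (n q : ℕ) : ℝ := 1 / (dlt α n * (q:ℝ)^2)

lemma aT_pos (α : ℝ) (n q : ℕ) (hq : 0 < q) : 0 < aT α n q := by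
  have h1 := dlt_pos α n
  have h2 : (0:ℝ) < (q:ℝ) := by exact_mod_cast hq
  unfold aT; positivity

lemma bT_pos (α : ℝ) (n q : ℕ) (hq : 0 < q) : 0 < bT α n q := by
  have h1 := dlt_pos α n
  have h2 : (0:ℝ) < (q:ℝ) := by exact_mod_cast hq
  unfold bT; positivity

/-- the box in `ξ`-space. -/
def rBox (α : ℝ) (n q : ℕ) : Set (Fin 2 → ℝ) :=
  univ.pi fun i => Icc (-(![aT α n q, bT α n q] i)) (![aT α n q, bT α n q] i)

/-- its preimage in `η`-space. -/
def RsetA (α : ℝ) (M : Matrix (Fin 2) (Fin 2) ℝ) (n q : ℕ) : Set (Fin 2 → ℝ) :=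
  {v | |Matrix.vecMul v M 0| ≤ aT α n q ∧ |Matrix.vecMul v M 1| ≤ bT α n q}

lemma RsetA_eq (α : ℝ) (M : Matrix (Fin 2) (Fin 2) ℝ) (n q : ℕ) :
    RsetA α M n q = (fun v => Matrix.vecMul v M) ⁻¹' rBox α n q := by
  ext v
  simp only [RsetA, rBox, mem_setOf_eq, mem_preimage, mem_pi, mem_univ, forall_true_left,
    mem_Icc, Fin.forall_fin_two]
  simp [abs_le, and_comm]

lemma measurableSet_rBox (α : ℝ) (n q : ℕ) : MeasurableSet (rBox α n q) :=
  MeasurableSet.univ_pi fun _ => measurableSet_Icc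

lemma measurable_vecMulM (M : Matrix (Fin 2) (Fin 2) ℝ) :
    Measurable (fun v : Fin 2 → ℝ => Matrix.vecMul v M) := by
  have h : (fun v : Fin 2 → ℝ => Matrix.vecMul v M) =
      (Matrix.toLin' Mᵀ : (Fin 2 → ℝ) →ₗ[ℝ] Fin 2 → ℝ) := by
    funext v; simp [Matrix.toLin'_apply, Matrix.mulVec_transpose]
  rw [h]
  exact (LinearMap.continuous_of_finiteDimensional _).measurable

lemma measurableSet_RsetA (α : ℝ) (M : Matrix (Fin 2) (Fin 2) ℝ) (n q : ℕ) :
    MeasurableSet (RsetA α M n q) := by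
  rw [RsetA_eq]; exact (measurableSet_rBox α n q).preimage (measurable_vecMulM M)

lemma measurePreserving_vecMul (A : Matrix (Fin 2) (Fin 2) ℝ) (hA : A.det = 1) :
    MeasurePreserving (fun v : Fin 2 → ℝ => Matrix.vecMul v A) volume volume := by
  have hfe : (fun v : Fin 2 → ℝ => Matrix.vecMul v A) =
      (Matrix.toLin' Aᵀ : (Fin 2 → ℝ) →ₗ[ℝ] Fin 2 → ℝ) := by
    funext v
    simp [Matrix.toLin'_apply, Matrix.mulVec_transpose]
  have hdet : LinearMap.det (Matrix.toLin' Aᵀ : (Fin 2 → ℝ) →ₗ[ℝ] Fin 2 → ℝ) = 1 := by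
    rw [LinearMap.det_toLin', Matrix.det_transpose, hA]
  constructor
  · rw [hfe]
    exact (LinearMap.continuous_of_finiteDimensional _).measurable
  · rw [hfe, Real.map_linearMap_volume_pi_eq_smul_volume_pi (by rw [hdet]; norm_num), hdet]
    simp

lemma volume_rBox (α : ℝ) (n q : ℕ) :
    volume (rBox α n q) = ENNReal.ofReal (2 * aT α n q) * ENNReal.ofReal (2 * bT α n q) := by
  rw [rBox, volume_pi_pi, Fin.prod_univ_two]
  simp [Real.volume_Icc]
  congr 1 <;> ring_nf <;> rw [ENNReal.ofReal_mul' (by norm_num), ENNReal.ofReal_ofNat]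

lemma volume_RsetA (α : ℝ) (M : Matrix (Fin 2) (Fin 2) ℝ) (hM : M.det = 1) (n q : ℕ) :
    volume (RsetA α M n q) = ENNReal.ofReal (2 * aT α n q) * ENNReal.ofReal (2 * bT α n q) := by
  rw [RsetA_eq, ← volume_rBox α n q]
  exact (measurePreserving_vecMul M hM).measure_preimage
    (measurableSet_rBox α n q).nullMeasurableSet

/-- half-open cell of the lattice `(1/q)ℤ²`. -/
def cellA (q : ℕ) (k : Fin 2 → ℤ) : Set (Fin 2 → ℝ) :=
  univ.pi fun i => Ico ((k i : ℝ)/(q:ℝ)) (((k i : ℝ)+1)/(q:ℝ))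

lemma mem_cellA_iff (q : ℕ) (hq : 0 < q) (k : Fin 2 → ℤ) (η : Fin 2 → ℝ) :
    η ∈ cellA q k ↔ ∀ i, k i = ⌊(q:ℝ) * η i⌋ := by
  have hq' : (0:ℝ) < (q:ℝ) := by exact_mod_cast hq
  simp only [cellA, mem_pi, mem_univ, forall_true_left, mem_Ico]
  refine forall_congr' fun i => ?_
  rw [div_le_iff₀ hq', lt_div_iff₀ hq', eq_comm, Int.floor_eq_iff]
  constructor <;> intro h <;> constructor <;> nlinarith [h.1, h.2]

lemma measurableSet_cellA (q : ℕ) (k : Fin 2 → ℤ) : MeasurableSet (cellA q k) :=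
  MeasurableSet.univ_pi fun _ => measurableSet_Ico

lemma cellA_cover (q : ℕ) (hq : 0 < q) (η : Fin 2 → ℝ) :
    η ∈ cellA q (fun i => ⌊(q:ℝ) * η i⌋) := by
  rw [mem_cellA_iff q hq]; intro i; rfl

lemma cellA_disjoint (q : ℕ) (hq : 0 < q) :
    Pairwise (Function.onFun Disjoint (cellA q)) := by
  intro k k' hkk'
  rw [Function.onFun, Set.disjoint_left]
  intro η hk hk'
  rw [mem_cellA_iff q hq] at hk hk'
  exact hkk' (by funext i; rw [hk i, hk' i])

lemma cellA_preimage (q : ℕ) (k m : Fin 2 → ℤ) :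
    (fun η : Fin 2 → ℝ => (fun i => (k i : ℝ)/(q:ℝ)) + η) ⁻¹' cellA q (k + m) = cellA q m := by
  ext η
  simp only [mem_preimage, cellA, mem_pi, mem_univ, forall_true_left, mem_Ico, Pi.add_apply]
  refine forall_congr' fun i => ?_
  have e1 : ((k i + m i : ℤ) : ℝ)/(q:ℝ) = (k i : ℝ)/(q:ℝ) + (m i : ℝ)/(q:ℝ) := by
    push_cast; rw [add_div]
  have e2 : (((k i + m i : ℤ) : ℝ)+1)/(q:ℝ) = (k i : ℝ)/(q:ℝ) + ((m i : ℝ)+1)/(q:ℝ) := by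
    push_cast; rw [add_assoc, add_div]
  rw [e1, e2, add_le_add_iff_left, add_lt_add_iff_left]

/-- the `q`-periodic bad set. -/
def BadperA (α : ℝ) (M : Matrix (Fin 2) (Fin 2) ℝ) (n q : ℕ) : Set (Fin 2 → ℝ) :=
  {η | ∃ m : Fin 2 → ℤ, (fun i => (m i : ℝ)/(q:ℝ) + η i) ∈ RsetA α M n q}

lemma iUnion_cellA (q : ℕ) (hq : 0 < q) : (⋃ k : Fin 2 → ℤ, cellA q k) = univ := by
  ext η
  simp only [mem_iUnion, mem_univ, iff_true]
  exact ⟨_, cellA_cover q hq η⟩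

/-- Per cell, the bad set has volume at most that of `RsetA`. -/
lemma badperA_cell_le (α : ℝ) (M : Matrix (Fin 2) (Fin 2) ℝ) (n q : ℕ) (hq : 0 < q)
    (k : Fin 2 → ℤ) :
    volume (BadperA α M n q ∩ cellA q k) ≤ volume (RsetA α M n q) := by
  have htrans : ∀ k : Fin 2 → ℤ,
      volume (BadperA α M n q ∩ cellA q k) = volume (BadperA α M n q ∩ cellA q 0) := by
    intro k
    have key : (fun η : Fin 2 → ℝ => (fun i => (k i : ℝ)/(q:ℝ)) + η) ⁻¹'
        (BadperA α M n q ∩ cellA q k) = BadperA α M n q ∩ cellA q 0 := by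
      rw [Set.preimage_inter]
      congr 1
      · ext η
        simp only [mem_preimage, BadperA, mem_setOf_eq, Pi.add_apply]
        constructor
        · rintro ⟨m, hm⟩
          exact ⟨m + k, by
            convert hm using 2 with i
            simp only [Pi.add_apply, Pi.sub_apply]; push_cast; ring⟩
        · rintro ⟨m, hm⟩
          exact ⟨m - k, by
            convert hm using 2 with i
            simp only [Pi.add_apply, Pi.sub_apply]; push_cast; ring⟩
      · have h := cellA_preimage q k 0
        rwa [add_zero] at h
    rw [← key, measure_preimage_add]
  rw [htrans k]
  have hsub : BadperA α M n q ∩ cellA q 0 ⊆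
      ⋃ m : Fin 2 → ℤ,
        ((fun η : Fin 2 → ℝ => (fun i => (m i : ℝ)/(q:ℝ)) + η) ⁻¹' RsetA α M n q) ∩
          cellA q 0 := by
    rintro η ⟨⟨m, hm⟩, hcell⟩
    exact mem_iUnion.2 ⟨m, ⟨hm, hcell⟩⟩
  refine le_trans (measure_mono hsub) (le_trans (measure_iUnion_le _) ?_)
  have heq : ∀ m : Fin 2 → ℤ,
      ((fun η : Fin 2 → ℝ => (fun i => (m i : ℝ)/(q:ℝ)) + η) ⁻¹' RsetA α M n q) ∩ cellA q 0 =
      (fun η : Fin 2 → ℝ => (fun i => (m i : ℝ)/(q:ℝ)) + η) ⁻¹'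
        (RsetA α M n q ∩ cellA q m) := by
    intro m
    rw [Set.preimage_inter]
    congr 1
    have h := cellA_preimage q m 0
    rw [add_zero] at h
    rw [h]
  calc ∑' m : Fin 2 → ℤ,
        volume (((fun η : Fin 2 → ℝ => (fun i => (m i : ℝ)/(q:ℝ)) + η) ⁻¹' RsetA α M n q) ∩
          cellA q 0)
      = ∑' m : Fin 2 → ℤ, volume (RsetA α M n q ∩ cellA q m) := by
        refine tsum_congr fun m => ?_
        rw [heq m, measure_preimage_add]
    _ = volume (⋃ m : Fin 2 → ℤ, RsetA α M n q ∩ cellA q m) := by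
        rw [measure_iUnion]
        · exact fun a b hab =>
            ((cellA_disjoint q hq) hab).mono inter_subset_right inter_subset_right
        · exact fun m => (measurableSet_RsetA α M n q).inter (measurableSet_cellA q m)
    _ ≤ volume (RsetA α M n q) := by
        rw [← Set.inter_iUnion, iUnion_cellA q hq, Set.inter_univ]

def BadHA (α : ℝ) (M : Matrix (Fin 2) (Fin 2) ℝ) (N n : ℕ) : Set (Fin 2 → ℝ) :=
  {η | (∀ i, |η i| ≤ (N:ℝ)) ∧ ∃ q : ℕ, 1 ≤ q ∧ (q:ℝ) ≤ (Real.sqrt (dlt α n))⁻¹ ∧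
    η ∈ BadperA α M n q}

lemma vol_BadHA_le (α : ℝ) (M : Matrix (Fin 2) (Fin 2) ℝ) (N n : ℕ) :
    volume (BadHA α M N n) ≤
      ∑ q ∈ Finset.Icc 1 (⌊(Real.sqrt (dlt α n))⁻¹⌋₊),
        (((2*N*q+1)^2 : ℕ) : ℝ≥0∞) * volume (RsetA α M n q) := by
  classical
  set Q := ⌊(Real.sqrt (dlt α n))⁻¹⌋₊
  have hsub : BadHA α M N n ⊆
      ⋃ q ∈ Finset.Icc 1 Q, ⋃ k ∈ (Fintype.piFinset fun _ : Fin 2 =>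
        Finset.Icc (-(N*q:ℤ)) (N*q)), (BadperA α M n q ∩ cellA q k) := by
    rintro η ⟨hbox, q, hq1, hqle, hper⟩
    have hq0 : 0 < q := hq1
    have hq0' : (0:ℝ) ≤ (q:ℝ) := by positivity
    have hQ : q ∈ Finset.Icc 1 Q := Finset.mem_Icc.2 ⟨hq1, Nat.le_floor hqle⟩
    refine mem_biUnion hQ ?_
    set k : Fin 2 → ℤ := fun i => ⌊(q:ℝ) * η i⌋ with hk
    have hkmem : k ∈ (Fintype.piFinset fun _ : Fin 2 => Finset.Icc (-(N*q:ℤ)) (N*q)) := by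
      rw [Fintype.mem_piFinset]
      intro i
      rw [Finset.mem_Icc]
      have h1 : |(q:ℝ) * η i| ≤ (N:ℝ) * q := by
        rw [abs_mul, abs_of_nonneg hq0', mul_comm]
        exact mul_le_mul_of_nonneg_right (hbox i) hq0'
      rw [abs_le] at h1
      constructor
      · refine Int.le_floor.2 ?_
        push_cast
        linarith [h1.1]
      · have hfl := Int.floor_le ((q:ℝ) * η i)
        have h2 : ((k i : ℝ)) ≤ (N:ℝ) * q := le_trans hfl h1.2
        have h3 : ((k i : ℝ)) ≤ ((N*q : ℤ) : ℝ) := by push_cast; linarith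
        exact_mod_cast h3
    exact mem_biUnion hkmem ⟨hper, cellA_cover q hq0 η⟩
  refine le_trans (measure_mono hsub) (le_trans (measure_biUnion_finset_le _ _) ?_)
  refine Finset.sum_le_sum fun q hq => ?_
  have hq0 : 0 < q := (Finset.mem_Icc.1 hq).1
  refine le_trans (measure_biUnion_finset_le _ _) ?_
  refine le_trans (Finset.sum_le_sum fun k _ => badperA_cell_le α M n q hq0 k) ?_
  rw [Finset.sum_const, nsmul_eq_mul]
  refine mul_le_mul_of_nonneg_right ?_ zero_le
  norm_cast
  rw [Fintype.card_piFinset]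
  simp only [Int.card_Icc]
  rw [Fin.prod_univ_two]
  have h4 : (((N*q:ℕ):ℤ) + 1 - -((N*q:ℕ):ℤ)).toNat = 2*(N*q)+1 := by omega
  rw [h4]
  exact le_of_eq (by ring)

lemma sum_inv_sq_le (Q : ℕ) : ∑ q ∈ Finset.Icc 1 Q, (1:ℝ)/(q:ℝ)^2 ≤ 2 - 1/(Q:ℝ) := by
  induction Q with
  | zero => simp
  | succ Q ih =>
    rw [Finset.sum_Icc_succ_top (by omega : 1 ≤ Q + 1)]
    rcases Nat.eq_zero_or_pos Q with h | h
    · subst h; norm_num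
    · have hQ : (1:ℝ) ≤ (Q:ℝ) := by exact_mod_cast h
      have key : (1:ℝ)/((Q:ℝ)+1)^2 ≤ 1/(Q:ℝ) - 1/((Q:ℝ)+1) := by
        rw [div_sub_div _ _ (by positivity) (by positivity),
          div_le_div_iff₀ (by positivity) (by positivity)]
        ring_nf
        nlinarith
      push_cast
      linarith

lemma dlt_bound (α : ℝ) (hα0 : 0 < α) (hα1 : α < 1/2) (n : ℕ) :
    1/((dlt α n)^2 * 2^n) ≤ 2 * ((2:ℝ)^(2*α-1))^n := by
  have h2 : (0:ℝ) < 2 := by norm_num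
  have hb : ((2:ℝ) ^ (n+1)) = (2:ℝ) ^ ((n:ℝ)+1) := by
    rw [← Real.rpow_natCast 2 (n+1)]; push_cast; ring_nf
  have hd : dlt α n = (2:ℝ) ^ (-(α*((n:ℝ)+1))) := by
    rw [dlt, hb, ← Real.rpow_mul (le_of_lt h2)]
    congr 1; ring
  have e1 : (dlt α n)^2 = (2:ℝ) ^ (-(α*((n:ℝ)+1)) * 2) := by
    rw [hd, ← Real.rpow_natCast ((2:ℝ) ^ (-(α*((n:ℝ)+1)))) 2, ← Real.rpow_mul (le_of_lt h2)]
    norm_num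
  have e2 : (2:ℝ)^n = (2:ℝ)^(n:ℝ) := (Real.rpow_natCast 2 n).symm
  have e3 : 1/((dlt α n)^2 * 2^n) = (2:ℝ) ^ (-(-(α*((n:ℝ)+1)) * 2 + (n:ℝ))) := by
    rw [e1, e2, ← Real.rpow_add h2, one_div, ← Real.rpow_neg (le_of_lt h2)]
  have e4 : 2 * ((2:ℝ)^(2*α-1))^n = (2:ℝ) ^ (1 + (2*α-1)*(n:ℝ)) := by
    rw [← Real.rpow_natCast ((2:ℝ)^(2*α-1)) n, ← Real.rpow_mul (le_of_lt h2),
      Real.rpow_add h2, Real.rpow_one]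
  rw [e3, e4]
  apply Real.rpow_le_rpow_of_exponent_le one_le_two
  have hn : (0:ℝ) ≤ (n:ℝ) := Nat.cast_nonneg n
  nlinarith

lemma vol_BadHA_le2 (α : ℝ) (hα0 : 0 < α) (hα1 : α < 1/2)
    (M : Matrix (Fin 2) (Fin 2) ℝ) (hM : M.det = 1) (N n : ℕ) :
    volume (BadHA α M N n) ≤
      ENNReal.ofReal ((16*(2*(N:ℝ)+1)^2) * ((2:ℝ)^(2*α-1))^n) := by
  refine le_trans (vol_BadHA_le α M N n) ?_
  set Q := ⌊(Real.sqrt (dlt α n))⁻¹⌋₊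
  have hD := dlt_pos α n
  have hP : (0:ℝ) < 2^n := by positivity
  have hterm : ∀ q ∈ Finset.Icc 1 Q,
      (((2*N*q+1)^2 : ℕ) : ℝ≥0∞) * volume (RsetA α M n q) ≤
      ENNReal.ofReal ((4*(2*(N:ℝ)+1)^2/((dlt α n)^2*2^n)) * (1/(q:ℝ)^2)) := by
    intro q hq
    have hq1 : 1 ≤ q := (Finset.mem_Icc.1 hq).1
    have hqr : (1:ℝ) ≤ (q:ℝ) := by exact_mod_cast hq1
    have hqr0 : (0:ℝ) < (q:ℝ) := by linarith
    have haT := aT_pos α n q hq1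
    have hbT := bT_pos α n q hq1
    have emul : ENNReal.ofReal ((((2*N*q+1)^2 : ℕ):ℝ) * (2*aT α n q * (2*bT α n q))) =
        (((2*N*q+1)^2 : ℕ) : ℝ≥0∞) *
        (ENNReal.ofReal (2*aT α n q) * ENNReal.ofReal (2*bT α n q)) := by
      rw [ENNReal.ofReal_mul (Nat.cast_nonneg _),
        ENNReal.ofReal_mul (mul_nonneg (by norm_num) haT.le), ENNReal.ofReal_natCast]
    rw [volume_RsetA α M hM n q, ← emul]
    apply ENNReal.ofReal_le_ofReal
    have hcast : (((2*N*q+1)^2 : ℕ) : ℝ) = (2*(N:ℝ)*(q:ℝ)+1)^2 := by push_cast; ring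
    rw [hcast, aT, bT]
    have hN : (0:ℝ) ≤ (N:ℝ) := Nat.cast_nonneg N
    have h1 : (2*(N:ℝ)*(q:ℝ)+1)^2 ≤ ((2*(N:ℝ)+1)*(q:ℝ))^2 := by
      have h0 : 2*(N:ℝ)*(q:ℝ)+1 ≤ (2*(N:ℝ)+1)*(q:ℝ) := by nlinarith
      exact pow_le_pow_left₀ (by positivity) h0 2
    have e1 : (2*(N:ℝ)*(q:ℝ)+1)^2 * (2 * (1 / (dlt α n * (q:ℝ)^2 * 2^n)) *
        (2 * (1 / (dlt α n * (q:ℝ)^2)))) =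
        (2*(N:ℝ)*(q:ℝ)+1)^2 * (4 / ((dlt α n)^2 * (q:ℝ)^4 * 2^n)) := by
      field_simp; ring
    have e2 : (4*(2*(N:ℝ)+1)^2/((dlt α n)^2*2^n)) * (1/(q:ℝ)^2) =
        ((2*(N:ℝ)+1)*(q:ℝ))^2 * (4 / ((dlt α n)^2 * (q:ℝ)^4 * 2^n)) := by
      field_simp
    rw [e1, e2]
    exact mul_le_mul_of_nonneg_right h1 (by positivity)
  refine le_trans (Finset.sum_le_sum hterm) ?_
  rw [← ENNReal.ofReal_sum_of_nonneg (fun q _ => by positivity)]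
  apply ENNReal.ofReal_le_ofReal
  rw [← Finset.mul_sum]
  have hsum : ∑ q ∈ Finset.Icc 1 Q, (1:ℝ)/(q:ℝ)^2 ≤ 2 := by
    refine le_trans (sum_inv_sq_le Q) ?_
    have h0 : (0:ℝ) ≤ 1/(Q:ℝ) := by positivity
    linarith
  have hC : (0:ℝ) ≤ 4*(2*(N:ℝ)+1)^2/((dlt α n)^2*2^n) := by positivity
  calc 4*(2*(N:ℝ)+1)^2/((dlt α n)^2*2^n) * ∑ q ∈ Finset.Icc 1 Q, (1:ℝ)/(q:ℝ)^2
      ≤ 4*(2*(N:ℝ)+1)^2/((dlt α n)^2*2^n) * 2 := mul_le_mul_of_nonneg_left hsum hC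
    _ = 8*(2*(N:ℝ)+1)^2 * (1/((dlt α n)^2*2^n)) := by ring
    _ ≤ 8*(2*(N:ℝ)+1)^2 * (2 * ((2:ℝ)^(2*α-1))^n) :=
        mul_le_mul_of_nonneg_left (dlt_bound α hα0 hα1 n) (by positivity)
    _ = (16*(2*(N:ℝ)+1)^2) * ((2:ℝ)^(2*α-1))^n := by ring

lemma tsum_vol_BadHA_ne_top (α : ℝ) (hα0 : 0 < α) (hα1 : α < 1/2)
    (M : Matrix (Fin 2) (Fin 2) ℝ) (hM : M.det = 1) (N : ℕ) :
    (∑' n : ℕ, volume (BadHA α M N n)) ≠ ⊤ := by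
  set r : ℝ := (2:ℝ)^(2*α-1) with hr
  have hr0 : 0 < r := Real.rpow_pos_of_pos two_pos _
  have hr1 : r < 1 := Real.rpow_lt_one_of_one_lt_of_neg one_lt_two (by linarith)
  set C : ℝ := 16*(2*(N:ℝ)+1)^2 with hC
  have hC0 : (0:ℝ) ≤ C := by positivity
  have hbound : (∑' n : ℕ, volume (BadHA α M N n)) ≤
      ∑' n : ℕ, ENNReal.ofReal C * (ENNReal.ofReal r)^n := by
    refine ENNReal.tsum_le_tsum fun n => ?_
    refine le_trans (vol_BadHA_le2 α hα0 hα1 M hM N n) ?_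
    rw [ENNReal.ofReal_mul hC0, ENNReal.ofReal_pow hr0.le]
  refine ne_top_of_le_ne_top ?_ hbound
  rw [ENNReal.tsum_mul_left, ENNReal.tsum_geometric]
  refine ENNReal.mul_ne_top ENNReal.ofReal_ne_top (ENNReal.inv_ne_top.2 ?_)
  rw [ne_eq, tsub_eq_zero_iff_le, not_le]
  exact ENNReal.ofReal_lt_one.2 hr1

lemma bgE_le_of_mem {g : GG} {T δ : ℝ} (h : δ ∈ bgSet g T) :
    bgE g T ≤ ENNReal.ofReal δ :=
  sInf_le (Set.mem_image_of_mem _ h)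

lemma key_lemma (α : ℝ) (hα0 : 0 < α) (hα1 : α < 1/2)
    (M : Matrix (Fin 2) (Fin 2) ℝ) (η : Fin 2 → ℝ)
    (hη : ∀ N : ℕ, ∀ᶠ n in Filter.atTop, η ∉ BadHA α M N n) :
    ∃ C : ℝ, 0 < C ∧ ∀ T : ℝ, 1 ≤ T →
      bgE (M, Matrix.vecMul η M) T < ENNReal.ofReal (C * T ^ (-α)) := by
  obtain ⟨N, hbox⟩ : ∃ N : ℕ, ∀ i, |η i| ≤ (N:ℝ) := by
    refine ⟨⌈|η 0|⌉₊ + ⌈|η 1|⌉₊, ?_⟩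
    intro i
    have h0 : |η 0| ≤ (⌈|η 0|⌉₊ : ℝ) := Nat.le_ceil _
    have h1 : |η 1| ≤ (⌈|η 1|⌉₊ : ℝ) := Nat.le_ceil _
    have hc : ((⌈|η 0|⌉₊ : ℝ)) + (⌈|η 1|⌉₊ : ℝ) = ((⌈|η 0|⌉₊ + ⌈|η 1|⌉₊ : ℕ) : ℝ) := by
      push_cast; ring
    have hz0 : (0:ℝ) ≤ (⌈|η 0|⌉₊ : ℝ) := Nat.cast_nonneg _
    have hz1 : (0:ℝ) ≤ (⌈|η 1|⌉₊ : ℝ) := Nat.cast_nonneg _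
    revert i
    rw [Fin.forall_fin_two]
    constructor
    · rw [← hc]; linarith
    · rw [← hc]; linarith
  obtain ⟨n₀, hn₀⟩ := Filter.eventually_atTop.1 (hη N)
  refine ⟨2 * (2:ℝ) ^ ((n₀:ℝ) * α), by positivity, ?_⟩
  intro T hT
  have hT0 : (0:ℝ) < T := lt_of_lt_of_le one_pos hT
  have hTα : (0:ℝ) < T ^ (-α) := Real.rpow_pos_of_pos hT0 _
  have hC1 : (1:ℝ) ≤ (2:ℝ) ^ ((n₀:ℝ) * α) :=
    Real.one_le_rpow one_le_two (by positivity)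
  set n := ⌊Real.logb 2 T⌋₊ with hn
  have hlogb : (0:ℝ) ≤ Real.logb 2 T := Real.logb_nonneg one_lt_two hT
  have hTe : (2:ℝ) ^ Real.logb 2 T = T := Real.rpow_logb two_pos (by norm_num) hT0
  have h1 : (2:ℝ) ^ ((n:ℝ)) ≤ T := by
    rw [← hTe]
    exact Real.rpow_le_rpow_of_exponent_le one_le_two (Nat.floor_le hlogb)
  have h2 : T < (2:ℝ) ^ ((n:ℝ)+1) := by
    rw [← hTe]
    exact Real.rpow_lt_rpow_of_exponent_lt one_lt_two (Nat.lt_floor_add_one _)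
  have hdlt_eq : dlt α n = ((2:ℝ) ^ ((n:ℝ)+1)) ^ (-α) := by
    rw [dlt, ← Real.rpow_natCast 2 (n+1)]
    push_cast
    ring_nf
  by_cases hcase : n₀ ≤ n
  · have hgood : η ∉ BadHA α M N n := hn₀ n hcase
    have hmem : dlt α n ∈ bgSet (M, Matrix.vecMul η M) T := by
      refine ⟨dlt_pos α n, ?_⟩
      intro q hq m hcon
      apply hgood
      refine ⟨hbox, (q:ℕ), q.one_le, hq, ⟨m, ?_⟩⟩
      have hq0 : (0:ℝ) < ((q:ℕ):ℝ) := by exact_mod_cast q.property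
      have hsplit : ∀ j, Matrix.vecMul (fun i => (m i : ℝ)/((q:ℕ):ℝ) + η i) M j =
          Matrix.vecMul (fun i => (m i : ℝ)/((q:ℕ):ℝ)) M j + Matrix.vecMul η M j := by
        intro j
        have he : (fun i => (m i : ℝ)/((q:ℕ):ℝ) + η i) =
            (fun i => (m i : ℝ)/((q:ℕ):ℝ)) + η := rfl
        rw [he, Matrix.add_vecMul]
        rfl
      constructor
      · rw [hsplit 0]
        refine le_trans hcon.1 ?_
        rw [aT]
        have hD := dlt_pos α n
        have hpow : ((2:ℝ)^(n:ℕ)) ≤ T := by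
          rw [← Real.rpow_natCast 2 n] at *
          exact h1
        have hden0 : (0:ℝ) < dlt α n * ((q:ℕ):ℝ)^2 * 2^n := by positivity
        apply one_div_le_one_div_of_le hden0
        have hnn : (0:ℝ) ≤ dlt α n * ((q:ℕ):ℝ)^2 := by positivity
        exact mul_le_mul_of_nonneg_left hpow hnn
      · rw [hsplit 1]
        exact hcon.2
    have hle := bgE_le_of_mem hmem
    refine lt_of_le_of_lt hle ?_
    rw [ENNReal.ofReal_lt_ofReal_iff (by positivity)]
    have hlt : dlt α n < T ^ (-α) := by
      rw [hdlt_eq]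
      exact Real.rpow_lt_rpow_of_neg hT0 h2 (by linarith)
    nlinarith
  · push_neg at hcase
    have hmem : (3/2:ℝ) ∈ bgSet (M, Matrix.vecMul η M) T := by
      refine ⟨by norm_num, ?_⟩
      intro q hq m
      exfalso
      have hq1 : (1:ℝ) ≤ ((q:ℕ):ℝ) := by exact_mod_cast q.one_le
      have h32 : (1:ℝ) < Real.sqrt (3/2) := by
        rw [show (1:ℝ) = Real.sqrt 1 from (Real.sqrt_one).symm]
        exact Real.sqrt_lt_sqrt (by norm_num) (by norm_num)
      have hinv : (Real.sqrt (3/2))⁻¹ < 1 := inv_lt_one_of_one_lt₀ h32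
      linarith
    have hle := bgE_le_of_mem hmem
    refine lt_of_le_of_lt hle ?_
    rw [ENNReal.ofReal_lt_ofReal_iff (by positivity)]
    have hn1 : (n:ℝ) + 1 ≤ (n₀:ℝ) := by exact_mod_cast hcase
    have h3 : T < (2:ℝ) ^ ((n₀:ℝ)) :=
      lt_of_lt_of_le h2 (Real.rpow_le_rpow_of_exponent_le one_le_two hn1)
    have h4 : ((2:ℝ) ^ ((n₀:ℝ)))^(-α) < T ^ (-α) :=
      Real.rpow_lt_rpow_of_neg hT0 h3 (by linarith)
    have h5 : ((2:ℝ) ^ ((n₀:ℝ)))^(-α) = ((2:ℝ) ^ ((n₀:ℝ) * α))⁻¹ := by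
      rw [← Real.rpow_mul (by norm_num : (0:ℝ) ≤ 2),
        ← Real.rpow_neg (by norm_num : (0:ℝ) ≤ 2)]
      congr 1
      ring
    have h6 : (0:ℝ) < (2:ℝ) ^ ((n₀:ℝ) * α) := Real.rpow_pos_of_pos two_pos _
    have h7 : (1:ℝ) < (2:ℝ) ^ ((n₀:ℝ) * α) * T ^ (-α) := by
      rw [h5] at h4
      calc (1:ℝ) = (2:ℝ) ^ ((n₀:ℝ) * α) * ((2:ℝ) ^ ((n₀:ℝ) * α))⁻¹ := by
            field_simp
        _ < (2:ℝ) ^ ((n₀:ℝ) * α) * T ^ (-α) := mul_lt_mul_of_pos_left h4 h6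
    nlinarith

end AuxBgDecay

/-- **Proposition 9.6 (generic decay of `b_g(T)`).** Let `0 < α < 1/2` and
`M ∈ SL(2,ℝ)`. Then for Lebesgue-almost every `ξ ∈ ℝ²` there is `C > 0` with
`b_{(M,ξ)}(T) < C T^{-α}` for all `T ≥ 1`. -/
theorem bg_generic_decay (α : ℝ) (hα0 : 0 < α) (hα1 : α < 1 / 2)
    (M : Matrix (Fin 2) (Fin 2) ℝ) (hM : M.det = 1) :
    ∀ᵐ ξ : Fin 2 → ℝ ∂(volume : Measure (Fin 2 → ℝ)),
      ∃ C : ℝ, 0 < C ∧ ∀ T : ℝ, 1 ≤ T →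
        bgE (M, ξ) T < ENNReal.ofReal (C * T ^ (-α)) := by
  classical
  have hM' := hM
  rw [Matrix.det_fin_two] at hM'
  set Minv : Matrix (Fin 2) (Fin 2) ℝ := !![M 1 1, -(M 0 1); -(M 1 0), M 0 0] with hMinvdef
  have hdetinv : Minv.det = 1 := by
    rw [hMinvdef, Matrix.det_fin_two]
    simp
    linarith
  have hMinvM : Minv * M = 1 := by
    ext i j
    fin_cases i <;> fin_cases j <;>
      simp [hMinvdef, Matrix.mul_apply, Fin.sum_univ_two, Matrix.one_apply] <;> linarith
  have hid : ∀ ξ : Fin 2 → ℝ, Matrix.vecMul (Matrix.vecMul ξ Minv) M = ξ := by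
    intro ξ
    rw [Matrix.vecMul_vecMul, hMinvM, Matrix.vecMul_one]
  have hg := (measurePreserving_vecMul Minv hdetinv).quasiMeasurePreserving
  have hae : ∀ᵐ η : Fin 2 → ℝ ∂(volume : Measure (Fin 2 → ℝ)),
      ∀ N : ℕ, ∀ᶠ n in Filter.atTop, η ∉ BadHA α M N n := by
    rw [MeasureTheory.ae_all_iff]
    exact fun N => MeasureTheory.ae_eventually_notMem (tsum_vol_BadHA_ne_top α hα0 hα1 M hM N)
  have hmain : ∀ᵐ η : Fin 2 → ℝ ∂(volume : Measure (Fin 2 → ℝ)),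
      ∃ C : ℝ, 0 < C ∧ ∀ T : ℝ, 1 ≤ T →
        bgE (M, Matrix.vecMul η M) T < ENNReal.ofReal (C * T ^ (-α)) :=
    hae.mono fun η hη => key_lemma α hα0 hα1 M η hη
  have hpull := hg.ae hmain
  refine hpull.mono fun ξ h => ?_
  rwa [hid ξ] at h


end
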